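/- Let d ≥ 2, let π : ℝ^d_{++} → ℝ be convex and positively homogeneous of degree 1, and let π̂ : ℝ^d_{++} → ℝ be continuous and positively homogeneous of degree 1 (not necessarily convex). Let P̄ ⊆ ℝ^d_{++} be nonempty, convex, and compact, and define Y_P̄ = {y : p·y ≤ π(p) for all p ∈ P̄} and Ŷ_P̄ = {y : p·y ≤ π̂(p) for all p ∈ P̄}, with Ŷ_P̄ nonempty. Set η = sup_{p∈P̄} |π(p) − π̂(p)|/‖p‖, R = sup_{p∈P̄} π(p)/‖p‖, and r = inf_{p∈P̄} π(p)/‖p‖. If 0 < r < R < ∞ and η < r, then d_H(Y_P̄, Ŷ_P̄) ≤ η · (R/r) · (1 + η/R)/(1 − η/r). -/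

import Mathlib

open scoped RealInnerProductSpace

/-- The strictly positive orthant of `ℝ^d`. -/
def posOrthant (d : ℕ) : Set (EuclideanSpace ℝ (Fin d)) := {p | ∀ i, 0 < p i}

open Filter Topology in
private lemma coneSet_isClosed {d : ℕ} (Pb : Set (EuclideanSpace ℝ (Fin d)))
    (hPbcomp : IsCompact Pb) (hne : Pb.Nonempty)
    (hnz : ∀ p ∈ Pb, 0 < ‖p‖) :
    IsClosed {x : EuclideanSpace ℝ (Fin d) | ∃ l : ℝ, ∃ p, 0 ≤ l ∧ p ∈ Pb ∧ x = l • p} := by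
  obtain ⟨p₀, hp₀, hmin⟩ := hPbcomp.exists_isMinOn hne continuous_norm.continuousOn
  have hδ : 0 < ‖p₀‖ := hnz p₀ hp₀
  apply IsSeqClosed.isClosed
  intro x a hxs hxa
  choose l p hl0 hpPb hxeq using hxs
  obtain ⟨B, hB⟩ := (hxa.norm).bddAbove_range
  have hBn : ∀ n, ‖x n‖ ≤ B := fun n => hB ⟨n, rfl⟩
  have hlB : ∀ n, l n ≤ B / ‖p₀‖ := by
    intro n
    have h1 : ‖x n‖ = l n * ‖p n‖ := by
      rw [hxeq n, norm_smul, Real.norm_eq_abs, abs_of_nonneg (hl0 n)]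
    have h2 : ‖p₀‖ ≤ ‖p n‖ := isMinOn_iff.mp hmin (p n) (hpPb n)
    rw [le_div_iff₀ hδ]
    nlinarith [hBn n, hl0 n]
  have hmem : ∀ n, (l n, p n) ∈ Set.Icc (0:ℝ) (B / ‖p₀‖) ×ˢ Pb :=
    fun n => ⟨⟨hl0 n, hlB n⟩, hpPb n⟩
  obtain ⟨⟨l₀, q⟩, ⟨hl₀, hq⟩, φ, hφ, htend⟩ := (isCompact_Icc.prod hPbcomp).tendsto_subseq hmem
  have h2 : Tendsto (fun n => l (φ n) • p (φ n)) atTop (𝓝 (l₀ • q)) :=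
    (continuous_smul.tendsto (l₀, q)).comp htend
  have h1 : Tendsto (fun n => x (φ n)) atTop (𝓝 a) := hxa.comp hφ.tendsto_atTop
  simp only [hxeq] at h1
  exact ⟨l₀, q, hl₀.1, hq, (tendsto_nhds_unique h1 h2)⟩

private lemma approx_lemma {d : ℕ} (Pb : Set (EuclideanSpace ℝ (Fin d)))
    (hPbne : Pb.Nonempty) (hPbconv : Convex ℝ Pb) (hPbcomp : IsCompact Pb)
    (hnz : ∀ p ∈ Pb, 0 < ‖p‖)
    (b : EuclideanSpace ℝ (Fin d) → ℝ) (hb : ∀ p ∈ Pb, 0 < b p)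
    (y : EuclideanSpace ℝ (Fin d)) {M c : ℝ} (hM : 0 ≤ M) (hc1 : c ≤ 1)
    (hyM : ∀ p ∈ Pb, ⟪p, y⟫ ≤ M * ‖p‖)
    (hcy : ∀ p ∈ Pb, ⟪p, c • y⟫ ≤ b p) :
    ∃ z, (∀ p ∈ Pb, ⟪p, z⟫ ≤ b p) ∧ dist y z ≤ (1 - c) * M := by
  set Bs : Set (EuclideanSpace ℝ (Fin d)) := {z | ∀ p ∈ Pb, ⟪p, z⟫ ≤ b p} with hBsdef
  have hBne : Bs.Nonempty := ⟨0, fun p hp => by rw [inner_zero_right]; exact (hb p hp).le⟩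
  have hBconv : Convex ℝ Bs := by
    intro z₁ h₁ z₂ h₂ a b' ha hb' hab p hp
    have e : ⟪p, a • z₁ + b' • z₂⟫ = a * ⟪p, z₁⟫ + b' * ⟪p, z₂⟫ := by
      rw [inner_add_right, real_inner_smul_right, real_inner_smul_right]
    rw [e]
    have habp : a * b p + b' * b p = b p := by rw [← add_mul, hab, one_mul]
    nlinarith [mul_le_mul_of_nonneg_left (h₁ p hp) ha, mul_le_mul_of_nonneg_left (h₂ p hp) hb']
  have hBclosed : IsClosed Bs := by
    have hrw : Bs = ⋂ p ∈ Pb, {z : EuclideanSpace ℝ (Fin d) | ⟪p, z⟫ ≤ b p} := by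
      ext z; simp [hBsdef]
    rw [hrw]
    exact isClosed_biInter fun p hp =>
      isClosed_le (Continuous.inner continuous_const continuous_id) continuous_const
  obtain ⟨P, hPB, hproj⟩ :=
    exists_norm_eq_iInf_of_complete_convex hBne hBclosed.isComplete hBconv y
  have hchar : ∀ w ∈ Bs, ⟪y - P, w - P⟫ ≤ 0 :=
    (norm_eq_iInf_iff_real_inner_le_zero hBconv hPB).1 hproj
  set v := y - P with hv
  have hdist : dist y P = ‖v‖ := dist_eq_norm y P
  have hCge : 0 ≤ (1 - c) * M := mul_nonneg (by linarith) hM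
  by_cases hv0 : v = 0
  · exact ⟨P, hPB, by rw [hdist, hv0, norm_zero]; exact hCge⟩
  have hvpos : 0 < ‖v‖ := norm_pos_iff.mpr hv0
  have hPinner : ⟪v, P⟫ = ⟪v, y⟫ - ‖v‖ ^ 2 := by
    have h' : ⟪v, y⟫ - ⟪v, P⟫ = ⟪v, v⟫ := by rw [← inner_sub_right]
    rw [real_inner_self_eq_norm_sq] at h'
    linarith
  have hstep1 : ‖v‖ ^ 2 ≤ (1 - c) * ⟪v, y⟫ := by
    have h := hchar (c • y) (fun p hp => hcy p hp)
    rw [inner_sub_right, real_inner_smul_right, hPinner] at h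
    linarith
  -- the cone generated by Pb
  let K : ConvexCone ℝ (EuclideanSpace ℝ (Fin d)) :=
    { carrier := {x | ∃ l : ℝ, ∃ p, 0 ≤ l ∧ p ∈ Pb ∧ x = l • p}
      smul_mem' := by
        rintro t ht x ⟨l, p, hl, hp, rfl⟩
        exact ⟨t * l, p, by positivity, hp, (smul_smul t l p)⟩
      add_mem' := by
        rintro x ⟨l, p, hl, hp, rfl⟩ x' ⟨m, q, hm, hq, rfl⟩
        rcases eq_or_lt_of_le (by linarith : (0:ℝ) ≤ l + m) with h | h
        · have hl0 : l = 0 := by linarith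
          have hm0 : m = 0 := by linarith
          exact ⟨0, p, le_refl 0, hp, by rw [hl0, hm0]; simp⟩
        · refine ⟨l + m, (l/(l+m)) • p + (m/(l+m)) • q, h.le,
            hPbconv hp hq (by positivity) (by positivity)
              (by rw [← add_div, div_self h.ne']), ?_⟩
          have e1 : (l + m) * (l / (l + m)) = l := by field_simp
          have e2 : (l + m) * (m / (l + m)) = m := by field_simp
          rw [smul_add, smul_smul, smul_smul, e1, e2] }
  have hKne : (K : Set (EuclideanSpace ℝ (Fin d))).Nonempty :=
    ⟨0, ⟨0, hPbne.choose, le_refl 0, hPbne.choose_spec, (zero_smul ℝ _).symm⟩⟩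
  have hKclosed : IsClosed (K : Set (EuclideanSpace ℝ (Fin d))) :=
    coneSet_isClosed Pb hPbcomp hPbne hnz
  have hvK : v ∈ K := by
    by_contra hnot
    let C : ProperCone ℝ (EuclideanSpace ℝ (Fin d)) :=
      ⟨K.toPointedCone (show (0 : EuclideanSpace ℝ (Fin d)) ∈ K from
        ⟨0, hPbne.choose, le_refl 0, hPbne.choose_spec, (zero_smul ℝ _).symm⟩), hKclosed⟩
    obtain ⟨u, hu1, hu2⟩ := C.hyperplane_separation' (x₀ := v) (fun h => hnot h)
    have hPu : P - u ∈ Bs := by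
      intro p hp
      have hpu : 0 ≤ ⟪p, u⟫ := hu1 p (show p ∈ K from ⟨1, p, zero_le_one, hp, (one_smul ℝ p).symm⟩)
      rw [inner_sub_right]
      have := hPB p hp
      linarith
    have h := hchar (P - u) hPu
    have h5 : P - u - P = -u := by abel
    rw [h5, inner_neg_right] at h
    linarith
  obtain ⟨l, p₀, hl, hp₀, hveq⟩ := hvK
  have hvy : ⟪v, y⟫ ≤ M * ‖v‖ := by
    have hn : ‖v‖ = l * ‖p₀‖ := by
      rw [hveq, norm_smul, Real.norm_eq_abs, abs_of_nonneg hl]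
    have hip : ⟪v, y⟫ = l * ⟪p₀, y⟫ := by rw [hveq, real_inner_smul_left]
    rw [hip, hn]
    have := hyM p₀ hp₀
    nlinarith
  have h3 : ‖v‖ ^ 2 ≤ (1 - c) * M * ‖v‖ := by
    calc ‖v‖ ^ 2 ≤ (1 - c) * ⟪v, y⟫ := hstep1
    _ ≤ (1 - c) * (M * ‖v‖) := mul_le_mul_of_nonneg_left hvy (by linarith)
    _ = (1 - c) * M * ‖v‖ := by ring
  refine ⟨P, hPB, ?_⟩
  rw [hdist]
  nlinarith [h3, hvpos]

theorem stmt7 (d : ℕ) (hd : 2 ≤ d)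
    (prof profhat : EuclideanSpace ℝ (Fin d) → ℝ)
    (hconv : ConvexOn ℝ (posOrthant d) prof)
    (hhom : ∀ p ∈ posOrthant d, ∀ l : ℝ, 0 < l → prof (l • p) = l * prof p)
    (hhatcont : ContinuousOn profhat (posOrthant d))
    (hhathom : ∀ p ∈ posOrthant d, ∀ l : ℝ, 0 < l → profhat (l • p) = l * profhat p)
    (Pb : Set (EuclideanSpace ℝ (Fin d))) (hPbne : Pb.Nonempty)
    (hPbconv : Convex ℝ Pb) (hPbcomp : IsCompact Pb) (hPbpos : Pb ⊆ posOrthant d)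
    (hYhatne : {y : EuclideanSpace ℝ (Fin d) | ∀ p ∈ Pb, ⟪p, y⟫ ≤ profhat p}.Nonempty)
    (eta R r : ℝ)
    (heta : eta = sSup ((fun p => |prof p - profhat p| / ‖p‖) '' Pb))
    (hR : R = sSup ((fun p => prof p / ‖p‖) '' Pb))
    (hrdef : r = sInf ((fun p => prof p / ‖p‖) '' Pb))
    (hrpos : 0 < r) (hrR : r < R) (hetar : eta < r) :
    Metric.hausdorffDist
        {y : EuclideanSpace ℝ (Fin d) | ∀ p ∈ Pb, ⟪p, y⟫ ≤ prof p}
        {y : EuclideanSpace ℝ (Fin d) | ∀ p ∈ Pb, ⟪p, y⟫ ≤ profhat p}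
      ≤ eta * (R / r) * ((1 + eta / R) / (1 - eta / r)) := by
  have hd0 : 0 < d := by omega
  have hnz : ∀ p ∈ Pb, 0 < ‖p‖ := by
    intro p hp
    have h := hPbpos hp ⟨0, hd0⟩
    have hne : p ≠ 0 := by
      intro h0; rw [h0] at h; exact lt_irrefl 0 h
    exact norm_pos_iff.mpr hne
  have hopen : IsOpen (posOrthant d) := by
    have hrw : posOrthant d = ⋂ i, {p : EuclideanSpace ℝ (Fin d) | 0 < p i} := by
      ext p; simp [posOrthant]
    rw [hrw]
    exact isOpen_iInter_of_finite fun i => isOpen_lt continuous_const (PiLp.continuous_apply 2 _ i)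
  have hprofcont : ContinuousOn prof (posOrthant d) := hconv.continuousOn hopen
  have hnormcont : ContinuousOn (fun p : EuclideanSpace ℝ (Fin d) => ‖p‖) Pb :=
    continuous_norm.continuousOn
  have hf1 : ContinuousOn (fun p => |prof p - profhat p| / ‖p‖) Pb :=
    ContinuousOn.div (((hprofcont.mono hPbpos).sub (hhatcont.mono hPbpos)).abs) hnormcont
      (fun p hp => (hnz p hp).ne')
  have hf2 : ContinuousOn (fun p => prof p / ‖p‖) Pb :=
    ContinuousOn.div (hprofcont.mono hPbpos) hnormcont (fun p hp => (hnz p hp).ne')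
  have hbdd1 : BddAbove ((fun p => |prof p - profhat p| / ‖p‖) '' Pb) :=
    hPbcomp.bddAbove_image hf1
  have hbdd2 : BddAbove ((fun p => prof p / ‖p‖) '' Pb) := hPbcomp.bddAbove_image hf2
  have hbdd3 : BddBelow ((fun p => prof p / ‖p‖) '' Pb) := hPbcomp.bddBelow_image hf2
  have hetale : ∀ p ∈ Pb, |prof p - profhat p| ≤ eta * ‖p‖ := by
    intro p hp
    have h : |prof p - profhat p| / ‖p‖ ≤ eta :=
      heta ▸ le_csSup hbdd1 (Set.mem_image_of_mem _ hp)
    exact (div_le_iff₀ (hnz p hp)).1 h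
  have hRle : ∀ p ∈ Pb, prof p ≤ R * ‖p‖ := by
    intro p hp
    have h : prof p / ‖p‖ ≤ R := hR ▸ le_csSup hbdd2 (Set.mem_image_of_mem _ hp)
    exact (div_le_iff₀ (hnz p hp)).1 h
  have hrle : ∀ p ∈ Pb, r * ‖p‖ ≤ prof p := by
    intro p hp
    have h : r ≤ prof p / ‖p‖ := hrdef ▸ csInf_le hbdd3 (Set.mem_image_of_mem _ hp)
    exact (le_div_iff₀ (hnz p hp)).1 h
  have heta0 : 0 ≤ eta := by
    obtain ⟨p₁, hp₁⟩ := hPbne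
    have h1 : (0:ℝ) ≤ |prof p₁ - profhat p₁| / ‖p₁‖ := by positivity
    have h2 : |prof p₁ - profhat p₁| / ‖p₁‖ ≤ eta :=
      heta ▸ le_csSup hbdd1 (Set.mem_image_of_mem _ hp₁)
    linarith
  have hRpos : 0 < R := hrpos.trans hrR
  have hretapos : 0 < r - eta := by linarith
  have hprofpos : ∀ p ∈ Pb, 0 < prof p :=
    fun p hp => lt_of_lt_of_le (mul_pos hrpos (hnz p hp)) (hrle p hp)
  have hhatlow : ∀ p ∈ Pb, prof p - eta * ‖p‖ ≤ profhat p := by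
    intro p hp
    have h := (abs_le.1 (hetale p hp)).2
    linarith
  have hhatup : ∀ p ∈ Pb, profhat p ≤ prof p + eta * ‖p‖ := by
    intro p hp
    have h := (abs_le.1 (hetale p hp)).1
    linarith
  have hhatpos : ∀ p ∈ Pb, 0 < profhat p := by
    intro p hp
    have := hhatlow p hp
    have := hrle p hp
    nlinarith [hnz p hp]
  have hgoal_eq : eta * (R / r) * ((1 + eta / R) / (1 - eta / r))
      = eta * (R + eta) / (r - eta) := by
    field_simp
  rw [hgoal_eq]
  have hCnonneg : 0 ≤ eta * (R + eta) / (r - eta) :=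
    div_nonneg (mul_nonneg heta0 (by linarith)) hretapos.le
  apply Metric.hausdorffDist_le_of_mem_dist hCnonneg
  · -- from the true production set into the estimated one
    intro y hy
    have hc1 : 1 - eta / r ≤ 1 := by
      have : 0 ≤ eta / r := div_nonneg heta0 hrpos.le
      linarith
    obtain ⟨z, hz, hdz⟩ := approx_lemma Pb hPbne hPbconv hPbcomp hnz profhat hhatpos y
      hRpos.le hc1
      (fun p hp => (hy p hp).trans (hRle p hp))
      (fun p hp => by
        rw [real_inner_smul_right]
        rcases le_or_gt (⟪p, y⟫ : ℝ) 0 with hle | hlt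
        · have hpos : 0 ≤ 1 - eta / r := by
            rw [sub_nonneg, div_le_one hrpos]; exact hetar.le
          have hmp : (1 - eta / r) * ⟪p, y⟫ ≤ 0 :=
            mul_nonpos_iff.mpr (Or.inl ⟨hpos, hle⟩)
          linarith [hhatpos p hp]
        · have hrep : 1 - eta / r = (r - eta) / r := by field_simp
          rw [hrep, div_mul_eq_mul_div, div_le_iff₀ hrpos]
          nlinarith [mul_le_mul_of_nonneg_left (hy p hp) hretapos.le,
            mul_le_mul_of_nonneg_left (hrle p hp) heta0,
            mul_le_mul_of_nonneg_left (hhatlow p hp) hrpos.le])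
    refine ⟨z, hz, hdz.trans ?_⟩
    have hrw2 : (1 - (1 - eta / r)) * R = eta * R / r := by ring
    rw [hrw2, div_le_div_iff₀ hrpos hretapos]
    nlinarith [mul_nonneg (mul_nonneg heta0 heta0) hRpos.le,
      mul_nonneg (mul_nonneg heta0 heta0) hrpos.le]
  · -- from the estimated production set into the true one
    intro y hy
    have hre : 0 < r + eta := by linarith
    have hc1 : r / (r + eta) ≤ 1 := by
      rw [div_le_one hre]; linarith
    obtain ⟨z, hz, hdz⟩ := approx_lemma Pb hPbne hPbconv hPbcomp hnz prof hprofpos y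
      (by linarith : (0:ℝ) ≤ R + eta) hc1
      (fun p hp => by
        have h1 := hy p hp
        have h2 := hhatup p hp
        have h3 := hRle p hp
        nlinarith)
      (fun p hp => by
        rw [real_inner_smul_right]
        rcases le_or_gt (⟪p, y⟫ : ℝ) 0 with hle | hlt
        · have hpos : 0 ≤ r / (r + eta) := div_nonneg hrpos.le hre.le
          have hmp : r / (r + eta) * ⟪p, y⟫ ≤ 0 :=
            mul_nonpos_iff.mpr (Or.inl ⟨hpos, hle⟩)
          linarith [hprofpos p hp]
        · rw [div_mul_eq_mul_div, div_le_iff₀ hre]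
          nlinarith [mul_le_mul_of_nonneg_left (hy p hp) hrpos.le,
            mul_le_mul_of_nonneg_left (hhatup p hp) hrpos.le,
            mul_le_mul_of_nonneg_left (hrle p hp) heta0])
    refine ⟨z, hz, hdz.trans ?_⟩
    have hrep : 1 - r / (r + eta) = eta / (r + eta) := by field_simp; ring
    rw [hrep, div_mul_eq_mul_div, div_le_div_iff₀ hre hretapos]
    nlinarith [mul_nonneg (mul_nonneg heta0 heta0) (by linarith : (0:ℝ) ≤ R + eta)]
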